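/- (Sum rule at infinity.) Let F₁, F₂ : ℝ^n ⇉ ℝ^m be set-valued mappings with closed graphs, let F := F₁ + F₂ and ȳ ∈ J(F). Assume: (a) (boundedness) there exist constants R > 0, ρ > 0 and a neighborhood V of ȳ such that whenever ‖x‖ > R, y₁ ∈ F₁(x), y₂ ∈ F₂(x) and y₁ + y₂ ∈ V, one has ‖y₁‖ < ρ and ‖y₂‖ < ρ; (b) (constraint qualification) for every (y₁, y₂) ∈ J⁺(F₁ + F₂, ȳ) one has D*F₁(∞, y₁)(0) ∩ (−D*F₂(∞, y₂)(0)) = {0}. Then gph F is locally closed at (∞, ȳ), and for all v ∈ ℝ^m, D*F(∞, ȳ)(v) ⊆ ⋃_{(ȳ₁,ȳ₂) ∈ J⁺(F₁+F₂,ȳ)} [ D*F₁(∞, ȳ₁)(v) + D*F₂(∞, ȳ₂)(v) ]. -/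

import Mathlib

open Filter Topology Set Metric Pointwise
open scoped RealInnerProductSpace ENNReal

noncomputable section

variable {E F G : Type*}
  [NormedAddCommGroup E] [InnerProductSpace ℝ E]
  [NormedAddCommGroup F] [InnerProductSpace ℝ F]
  [NormedAddCommGroup G] [InnerProductSpace ℝ G]

/-- The regular (Fréchet) normal cone to a subset of a product of inner product
spaces, at a point `p` (empty if `p ∉ Ω`). -/
def frechetNormalCone2 (Ω : Set (E × F)) (p : E × F) : Set (E × F) :=
  {ξ | p ∈ Ω ∧ ∀ ε > (0:ℝ), ∀ᶠ q in nhdsWithin p Ω,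
      ⟪ξ.1, q.1 - p.1⟫ + ⟪ξ.2, q.2 - p.2⟫ ≤ ε * ‖q - p‖}

/-- The limiting (Mordukhovich) normal cone. -/
def limitingNormalCone2 (Ω : Set (E × F)) (p : E × F) : Set (E × F) :=
  {ξ | ∃ pk : ℕ → E × F, ∃ ξk : ℕ → E × F,
    (∀ k, pk k ∈ Ω) ∧ Tendsto pk atTop (𝓝 p) ∧
    (∀ k, ξk k ∈ frechetNormalCone2 Ω (pk k)) ∧ Tendsto ξk atTop (𝓝 ξ)}

/-- The normal cone to `Ω ⊆ E × F` at `(∞, ȳ)`. -/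
def normalConeAtInfty (Ω : Set (E × F)) (ybar : F) : Set (E × F) :=
  {ξ | ∃ pk : ℕ → E × F, ∃ ξk : ℕ → E × F,
    (∀ k, pk k ∈ Ω) ∧ Tendsto (fun k => ‖(pk k).1‖) atTop atTop ∧
    Tendsto (fun k => (pk k).2) atTop (𝓝 ybar) ∧
    (∀ k, ξk k ∈ frechetNormalCone2 Ω (pk k)) ∧ Tendsto ξk atTop (𝓝 ξ)}

/-- `Ω ⊆ E × F` is locally closed at `(∞, ȳ)`. -/
def LocallyClosedAtInfty (Ω : Set (E × F)) (ybar : F) : Prop :=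
  ∃ R > (0:ℝ), ∃ V ∈ 𝓝 ybar, IsClosed V ∧
    IsClosed (Ω ∩ {p : E × F | R ≤ ‖p.1‖ ∧ p.2 ∈ V})

/-- Graph of a set-valued mapping. -/
def svGraph (S : E → Set F) : Set (E × F) := {p | p.2 ∈ S p.1}

/-- Jelonek set of a set-valued mapping. -/
def jelonek (S : E → Set F) : Set F :=
  {y | ∃ xk : ℕ → E, ∃ yk : ℕ → F,
    Tendsto (fun k => ‖xk k‖) atTop atTop ∧ (∀ k, yk k ∈ S (xk k)) ∧
    Tendsto yk atTop (𝓝 y)}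

/-- Coderivative of a set-valued mapping at a point of its graph. -/
def coderiv (S : E → Set F) (x : E) (y : F) (v : F) : Set E :=
  {u | (u, -v) ∈ limitingNormalCone2 (svGraph S) (x, y)}

/-- Coderivative of a set-valued mapping at `(∞, ȳ)`. -/
def coderivAtInfty (S : E → Set F) (ybar : F) (v : F) : Set E :=
  {u | (u, -v) ∈ normalConeAtInfty (svGraph S) ybar}

/-- Regular normal cone, one-space version. -/
def frechetNormalCone1 (Ω : Set E) (x : E) : Set E :=
  {ξ | x ∈ Ω ∧ ∀ ε > (0:ℝ), ∀ᶠ x' in nhdsWithin x Ω, ⟪ξ, x' - x⟫ ≤ ε * ‖x' - x‖}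

/-- Normal cone at infinity to an unbounded subset of `E`. -/
def normalConeAtInfty1 (Ω : Set E) : Set E :=
  {ξ | ∃ xk : ℕ → E, ∃ ξk : ℕ → E, (∀ k, xk k ∈ Ω) ∧
    Tendsto (fun k => ‖xk k‖) atTop atTop ∧
    (∀ k, ξk k ∈ frechetNormalCone1 Ω (xk k)) ∧ Tendsto ξk atTop (𝓝 ξ)}

/-- Epigraph of an extended-real-valued function. -/
def epiSet (f : E → EReal) : Set (E × ℝ) := {p | f p.1 ≤ (p.2 : EReal)}

/-- Graph of an extended-real-valued function, as a subset of `E × ℝ`. -/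
def gphFun (f : E → EReal) : Set (E × ℝ) := {p | f p.1 = (p.2 : EReal)}

/-- Jelonek set of a function. -/
def jelonekFun (f : E → EReal) : Set ℝ :=
  {y | ∃ xk : ℕ → E, Tendsto (fun k => ‖xk k‖) atTop atTop ∧
    Tendsto (fun k => f (xk k)) atTop (𝓝 (y : EReal))}

/-- Limiting subdifferential of `f` at `x` (empty outside `dom f`). -/
def limSubdiff (f : E → EReal) (x : E) : Set E :=
  {u | ∃ r : ℝ, f x = (r : EReal) ∧
    (u, (-1 : ℝ)) ∈ limitingNormalCone2 (epiSet f) (x, r)}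

/-- Limiting subdifferential of `f` at `(∞, ȳ)`. -/
def limSubdiffAtInfty (f : E → EReal) (ybar : ℝ) : Set E :=
  {u | (u, (-1 : ℝ)) ∈ normalConeAtInfty (epiSet f) ybar}

/-- Singular subdifferential of `f` at `(∞, ȳ)`. -/
def singSubdiffAtInfty (f : E → EReal) (ybar : ℝ) : Set E :=
  {u | (u, (0 : ℝ)) ∈ normalConeAtInfty (epiSet f) ybar}

/-- Inverse of a set-valued mapping. -/
def svInv (S : E → Set F) (y : F) : Set E := {x | y ∈ S x}

/-- Preimage `F⁻¹(V) = {x : F(x) ∩ V ≠ ∅}`. -/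
def svPreimage (S : E → Set F) (V : Set F) : Set E := {x | (S x ∩ V).Nonempty}

/-- Distance function of a set-valued mapping, with value `+∞` on empty values. -/
def dSV (S : E → Set F) (p : E × F) : EReal :=
  ((EMetric.infEdist p.2 (S p.1) : ℝ≥0∞) : EReal)

/-- Regular normal cone on `(E × F) × ℝ`. -/
def frechetNormalCone3 (Ω : Set ((E × F) × ℝ)) (p : (E × F) × ℝ) : Set ((E × F) × ℝ) :=
  {ξ | p ∈ Ω ∧ ∀ ε > (0:ℝ), ∀ᶠ q in nhdsWithin p Ω,
      ⟪ξ.1.1, q.1.1 - p.1.1⟫ + ⟪ξ.1.2, q.1.2 - p.1.2⟫ + ξ.2 * (q.2 - p.2)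
        ≤ ε * ‖q - p‖}

/-- Limiting normal cone on `(E × F) × ℝ`. -/
def limitingNormalCone3 (Ω : Set ((E × F) × ℝ)) (p : (E × F) × ℝ) : Set ((E × F) × ℝ) :=
  {ξ | ∃ pk ξk : ℕ → (E × F) × ℝ, (∀ k, pk k ∈ Ω) ∧ Tendsto pk atTop (𝓝 p) ∧
    (∀ k, ξk k ∈ frechetNormalCone3 Ω (pk k)) ∧ Tendsto ξk atTop (𝓝 ξ)}

/-- Limiting subdifferential of the distance function `d_F`. -/
def limSubdiffD (S : E → Set F) (p : E × F) : Set (E × F) :=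
  {w | ∃ r : ℝ, dSV S p = (r : EReal) ∧
    (w, (-1 : ℝ)) ∈ limitingNormalCone3 {q : (E × F) × ℝ | dSV S q.1 ≤ (q.2 : EReal)} (p, r)}

/-- The set `J⁺(F₁ + F₂, y)`. -/
def jplus (S₁ S₂ : E → Set F) (y : F) : Set (F × F) :=
  {q | ∃ xk : ℕ → E, ∃ y1k y2k : ℕ → F,
    Tendsto (fun k => ‖xk k‖) atTop atTop ∧
    (∀ k, y1k k ∈ S₁ (xk k)) ∧ (∀ k, y2k k ∈ S₂ (xk k)) ∧
    Tendsto y1k atTop (𝓝 q.1) ∧ Tendsto y2k atTop (𝓝 q.2) ∧ q.1 + q.2 = y}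

/-- The set `J°(F₂ ∘ F₁, y)`. -/
def jcirc (S₁ : E → Set G) (S₂ : G → Set F) (y : F) : Set G :=
  {z | ∃ xk : ℕ → E, ∃ zk : ℕ → G, ∃ yk : ℕ → F,
    Tendsto (fun k => ‖xk k‖) atTop atTop ∧ (∀ k, zk k ∈ S₁ (xk k)) ∧
    (∀ k, yk k ∈ S₂ (zk k)) ∧ Tendsto zk atTop (𝓝 z) ∧ Tendsto yk atTop (𝓝 y)}

/-- Composition `F₂ ∘ F₁` of set-valued mappings. -/
def svComp (S₂ : G → Set F) (S₁ : E → Set G) (x : E) : Set F :=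
  {y | ∃ z ∈ S₁ x, y ∈ S₂ z}

abbrev Eucl (n : ℕ) := EuclideanSpace ℝ (Fin n)

namespace SumRuleAux

variable {X Y₁ Y₂ : Type*}
  [NormedAddCommGroup X] [InnerProductSpace ℝ X]
  [NormedAddCommGroup Y₁] [InnerProductSpace ℝ Y₁]
  [NormedAddCommGroup Y₂] [InnerProductSpace ℝ Y₂]

def i3 (ξ q : X × Y₁ × Y₂) : ℝ := ⟪ξ.1, q.1⟫ + ⟪ξ.2.1, q.2.1⟫ + ⟪ξ.2.2, q.2.2⟫

lemma i3_add_left (a b q : X × Y₁ × Y₂) : i3 (a + b) q = i3 a q + i3 b q := by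
  simp [i3, inner_add_left]; ring

lemma i3_sub_left (a b q : X × Y₁ × Y₂) : i3 (a - b) q = i3 a q - i3 b q := by
  simp [i3, inner_sub_left]; ring

lemma i3_smul_left (c : ℝ) (a q : X × Y₁ × Y₂) : i3 (c • a) q = c * i3 a q := by
  simp [i3, real_inner_smul_left]; ring

lemma i3_comm (a b : X × Y₁ × Y₂) : i3 a b = i3 b a := by
  simp [i3, real_inner_comm]

lemma i3_add_right (a b q : X × Y₁ × Y₂) : i3 q (a + b) = i3 q a + i3 q b := by
  rw [i3_comm, i3_add_left, i3_comm a q, i3_comm b q]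

lemma i3_sub_right (a b q : X × Y₁ × Y₂) : i3 q (a - b) = i3 q a - i3 q b := by
  rw [i3_comm, i3_sub_left, i3_comm a q, i3_comm b q]

lemma i3_zero_right (a : X × Y₁ × Y₂) : i3 a 0 = 0 := by simp [i3]

lemma i3_self (w : X × Y₁ × Y₂) : i3 w w = ‖w.1‖^2 + ‖w.2.1‖^2 + ‖w.2.2‖^2 := by
  simp [i3, real_inner_self_eq_norm_sq]

lemma norm_prod3 (w : X × Y₁ × Y₂) : ‖w‖ = max ‖w.1‖ (max ‖w.2.1‖ ‖w.2.2‖) := by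
  rw [Prod.norm_def, Prod.norm_def]

lemma norm_sq_le_i3_self (w : X × Y₁ × Y₂) : ‖w‖^2 ≤ i3 w w := by
  rw [i3_self, norm_prod3]
  rcases max_cases ‖w.1‖ (max ‖w.2.1‖ ‖w.2.2‖) with ⟨h, _⟩ | ⟨h, _⟩ <;> rw [h] <;>
    rcases max_cases ‖w.2.1‖ ‖w.2.2‖ with ⟨h2, _⟩ | ⟨h2, _⟩ <;>
      [skip; skip; rw [h2]; rw [h2]] <;>
    nlinarith [sq_nonneg ‖w.1‖, sq_nonneg ‖w.2.1‖, sq_nonneg ‖w.2.2‖]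

lemma i3_self_nonneg (w : X × Y₁ × Y₂) : 0 ≤ i3 w w :=
  le_trans (sq_nonneg _) (norm_sq_le_i3_self w)

lemma i3_self_le (w : X × Y₁ × Y₂) : i3 w w ≤ 3 * ‖w‖^2 := by
  have h1 : ‖w.1‖ ≤ ‖w‖ := norm_fst_le w
  have h2 : ‖w.2.1‖ ≤ ‖w‖ := le_trans (norm_fst_le w.2) (norm_snd_le w)
  have h3 : ‖w.2.2‖ ≤ ‖w‖ := le_trans (norm_snd_le w.2) (norm_snd_le w)
  have g1 : ‖w.1‖^2 ≤ ‖w‖^2 := pow_le_pow_left₀ (norm_nonneg _) h1 2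
  have g2 : ‖w.2.1‖^2 ≤ ‖w‖^2 := pow_le_pow_left₀ (norm_nonneg _) h2 2
  have g3 : ‖w.2.2‖^2 ≤ ‖w‖^2 := pow_le_pow_left₀ (norm_nonneg _) h3 2
  rw [i3_self]; linarith

lemma i3_le (ξ w : X × Y₁ × Y₂) : i3 ξ w ≤ (‖ξ.1‖ + ‖ξ.2.1‖ + ‖ξ.2.2‖) * ‖w‖ := by
  have h1 : ‖w.1‖ ≤ ‖w‖ := norm_fst_le w
  have h2 : ‖w.2.1‖ ≤ ‖w‖ := le_trans (norm_fst_le w.2) (norm_snd_le w)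
  have h3 : ‖w.2.2‖ ≤ ‖w‖ := le_trans (norm_snd_le w.2) (norm_snd_le w)
  have c1 := real_inner_le_norm ξ.1 w.1
  have c2 := real_inner_le_norm ξ.2.1 w.2.1
  have c3 := real_inner_le_norm ξ.2.2 w.2.2
  have n1 := norm_nonneg ξ.1
  have n2 := norm_nonneg ξ.2.1
  have n3 := norm_nonneg ξ.2.2
  unfold i3
  nlinarith [norm_nonneg w.1, norm_nonneg w.2.1, norm_nonneg w.2.2]

lemma i3_expand (a b : X × Y₁ × Y₂) :
    i3 (a + b) (a + b) = i3 a a + 2 * i3 a b + i3 b b := by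
  rw [i3_add_left, i3_add_right, i3_add_right, i3_comm b a]; ring

/-- Fréchet normal cone in the triple product, using `i3`. -/
def fn3 (Ω : Set (X × Y₁ × Y₂)) (p : X × Y₁ × Y₂) : Set (X × Y₁ × Y₂) :=
  {ξ | p ∈ Ω ∧ ∀ ε > (0:ℝ), ∀ᶠ q in nhdsWithin p Ω, i3 ξ (q - p) ≤ ε * ‖q - p‖}

lemma i3_neg_left (a b : X × Y₁ × Y₂) : i3 (-a) b = -(i3 a b) := by
  simp [i3, inner_neg_left]; ring

lemma i3_neg_right (a b : X × Y₁ × Y₂) : i3 a (-b) = -(i3 a b) := by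
  rw [i3_comm, i3_neg_left, i3_comm]

lemma continuous_i3 (a : X × Y₁ × Y₂) : Continuous (fun q : X × Y₁ × Y₂ => i3 a q) := by
  unfold i3
  exact ((continuous_const.inner continuous_fst).add
    (continuous_const.inner continuous_snd.fst)).add
    (continuous_const.inner continuous_snd.snd)

lemma continuous_i3' : Continuous (fun q : (X × Y₁ × Y₂) × (X × Y₁ × Y₂) => i3 q.1 q.2) := by
  unfold i3
  exact ((continuous_fst.fst.inner continuous_snd.fst).add
    (continuous_fst.snd.fst.inner continuous_snd.snd.fst)).add
    (continuous_fst.snd.snd.inner continuous_snd.snd.snd)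

lemma min_algebra (ξ pp a b q : X × Y₁ × Y₂) (k C : ℝ)
    (h : -(i3 ξ (a - pp)) + k/2 * i3 (a-b) (a-b) + C/2 * i3 (a-pp) (a-pp)
       ≤ -(i3 ξ (q - pp)) + k/2 * i3 (q-b) (q-b) + C/2 * i3 (q-pp) (q-pp)) :
    i3 (ξ - k•(a-b) - C•(a-pp)) (q - a) ≤ (k+C)/2 * i3 (q-a) (q-a) := by
  have e0 : q - pp = (a - pp) + (q - a) := by abel
  have e0b : q - b = (a - b) + (q - a) := by abel
  have E1 : i3 ξ (q - pp) = i3 ξ (a - pp) + i3 ξ (q - a) := by rw [e0, i3_add_right]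
  have E2 : i3 (q-b) (q-b) = i3 (a-b) (a-b) + 2 * i3 (a-b) (q-a) + i3 (q-a) (q-a) := by
    rw [e0b, i3_expand]
  have E3 : i3 (q-pp) (q-pp) = i3 (a-pp) (a-pp) + 2 * i3 (a-pp) (q-a) + i3 (q-a) (q-a) := by
    rw [e0, i3_expand]
  have E4 : i3 (ξ - k•(a-b) - C•(a-pp)) (q - a)
      = i3 ξ (q-a) - k * i3 (a-b) (q-a) - C * i3 (a-pp) (q-a) := by
    rw [i3_sub_left, i3_sub_left, i3_smul_left, i3_smul_left]
  rw [E4]; rw [E1, E2, E3] at h; linarith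

lemma min_algebra2 (a b q : X × Y₁ × Y₂) (k : ℝ)
    (h : k/2 * i3 (a-b) (a-b) ≤ k/2 * i3 (a-q) (a-q)) :
    i3 (k•(a-b)) (q - b) ≤ k/2 * i3 (q-b) (q-b) := by
  have e0 : a - q = (a - b) - (q - b) := by abel
  have E2 : i3 (a-q) (a-q) = i3 (a-b) (a-b) - 2 * i3 (a-b) (q-b) + i3 (q-b) (q-b) := by
    have e : a - q = (a-b) + (-(q-b)) := by abel
    rw [e, i3_expand, i3_neg_right, i3_neg_left, i3_neg_right]; ring
  rw [i3_smul_left]; rw [E2] at h; linarith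

variable [FiniteDimensional ℝ X] [FiniteDimensional ℝ Y₁] [FiniteDimensional ℝ Y₂]

set_option maxHeartbeats 1000000 in
lemma fuzzy {Ω₁ Ω₂ : Set (X × Y₁ × Y₂)} (hc₁ : IsClosed Ω₁) (hc₂ : IsClosed Ω₂)
    {p ξ : X × Y₁ × Y₂} (hξ : ξ ∈ fn3 (Ω₁ ∩ Ω₂) p) {ε : ℝ} (hε : 0 < ε) :
    ∃ p₁ p₂ ξ₁ ξ₂ : X × Y₁ × Y₂, ‖p₁ - p‖ ≤ ε ∧ ‖p₂ - p‖ ≤ ε ∧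
      ξ₁ ∈ fn3 Ω₁ p₁ ∧ ξ₂ ∈ fn3 Ω₂ p₂ ∧ ‖ξ₁ + ξ₂ - ξ‖ ≤ ε := by
  obtain ⟨hp, hF⟩ := hξ
  have h8 : (0:ℝ) < ε/8 := by positivity
  obtain ⟨δ, hδ, hineq⟩ := Metric.mem_nhdsWithin_iff.mp (hF (ε/8) h8)
  set r : ℝ := min (δ/2) ε with hrdef
  have hr0 : 0 < r := lt_min (by linarith) hε
  have hrδ : r < δ := lt_of_le_of_lt (min_le_left _ _) (by linarith)
  have hrε : r ≤ ε := min_le_right _ _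
  set C : ℝ := 1 + 2*ε/r with hCdef
  have hC1 : (1:ℝ) ≤ C := by
    rw [hCdef]
    have : 0 ≤ 2*ε/r := by positivity
    linarith
  have hC0 : (0:ℝ) < C := by linarith
  have hC0 : (0:ℝ) < C := by linarith
  have hβ : ε/(4*C) ≤ r/8 := by
    rw [hCdef, div_le_div_iff₀ (by positivity) (by norm_num)]
    have : 2*ε/r * r = 2*ε := by field_simp
    nlinarith
  clear_value r C
  -- the penalized functions and the constraint set
  set φ : ℕ → ((X × Y₁ × Y₂) × (X × Y₁ × Y₂)) → ℝ :=
    fun k q => -(i3 ξ (q.1 - p)) + ((k:ℝ)+1)/2 * i3 (q.1-q.2) (q.1-q.2)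
      + C/2 * i3 (q.1-p) (q.1-p) with hφdef
  set S : Set ((X × Y₁ × Y₂) × (X × Y₁ × Y₂)) :=
    (Ω₁ ∩ closedBall p r) ×ˢ (Ω₂ ∩ closedBall p r) with hSdef
  have hScomp : IsCompact S :=
    ((isCompact_closedBall p r).inter_left hc₁).prod
      ((isCompact_closedBall p r).inter_left hc₂)
  have hpS : ((p, p) : _) ∈ S :=
    ⟨⟨hp.1, mem_closedBall_self hr0.le⟩, ⟨hp.2, mem_closedBall_self hr0.le⟩⟩
  have hcont : ∀ k : ℕ, ContinuousOn (φ k) S := by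
    intro k
    apply Continuous.continuousOn
    apply Continuous.add
    apply Continuous.add
    · exact ((continuous_i3 ξ).comp (continuous_fst.sub continuous_const)).neg
    · exact continuous_const.mul (continuous_i3'.comp
        ((continuous_fst.sub continuous_snd).prodMk (continuous_fst.sub continuous_snd)))
    · exact continuous_const.mul (continuous_i3'.comp
        ((continuous_fst.sub continuous_const).prodMk (continuous_fst.sub continuous_const)))
  choose m hmS hmin using fun k : ℕ => hScomp.exists_isMinOn ⟨(p,p), hpS⟩ (hcont k)
  -- basic properties of the minimizers
  have hm1Ω : ∀ k, (m k).1 ∈ Ω₁ := fun k => ((hmS k).1).1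
  have hm2Ω : ∀ k, (m k).2 ∈ Ω₂ := fun k => ((hmS k).2).1
  have hm1r : ∀ k, ‖(m k).1 - p‖ ≤ r := fun k => by
    have := ((hmS k).1).2; rwa [Metric.mem_closedBall, dist_eq_norm] at this
  have hm2r : ∀ k, ‖(m k).2 - p‖ ≤ r := fun k => by
    have := ((hmS k).2).2; rwa [Metric.mem_closedBall, dist_eq_norm] at this
  have hφ0 : ∀ k, φ k (m k) ≤ 0 := by
    intro k
    have h := isMinOn_iff.mp (hmin k) (p,p) hpS
    have hz : φ k (p,p) = 0 := by simp [hφdef, sub_self, i3_zero_right]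
    linarith
  set M : ℝ := (‖ξ.1‖ + ‖ξ.2.1‖ + ‖ξ.2.2‖) * r with hMdef
  have hM0 : 0 ≤ M := by
    have := norm_nonneg ξ.1; have := norm_nonneg ξ.2.1; have := norm_nonneg ξ.2.2
    have := hr0.le; positivity
  clear_value M
  have hiM : ∀ k, i3 ξ ((m k).1 - p) ≤ M := by
    intro k
    calc i3 ξ ((m k).1 - p) ≤ (‖ξ.1‖ + ‖ξ.2.1‖ + ‖ξ.2.2‖) * ‖(m k).1 - p‖ := i3_le _ _
    _ ≤ M := by
        rw [hMdef]
        apply mul_le_mul_of_nonneg_left (hm1r k)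
        have := norm_nonneg ξ.1; have := norm_nonneg ξ.2.1; have := norm_nonneg ξ.2.2
        linarith
  have hQd : ∀ k, i3 ((m k).1 - (m k).2) ((m k).1 - (m k).2) ≤ 2*M/((k:ℝ)+1) := by
    intro k
    have h0 := hφ0 k
    have hQp : 0 ≤ i3 ((m k).1-p) ((m k).1-p) := i3_self_nonneg _
    have hk1 : (0:ℝ) < (k:ℝ)+1 := by positivity
    rw [hφdef] at h0
    simp only at h0
    rw [le_div_iff₀ hk1]
    have hCQp : 0 ≤ C/2 * i3 ((m k).1-p) ((m k).1-p) := mul_nonneg (div_nonneg hC0.le (by norm_num)) hQp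
    nlinarith [hiM k]
  have hdnorm : ∀ k, ‖(m k).1 - (m k).2‖^2 ≤ 2*M/((k:ℝ)+1) :=
    fun k => le_trans (norm_sq_le_i3_self _) (hQd k)
  have hdlim : Tendsto (fun k => (m k).1 - (m k).2) atTop (𝓝 0) := by
    have h1 : Tendsto (fun k : ℕ => 2*M/((k:ℝ)+1)) atTop (𝓝 0) := by
      have h0 := (tendsto_const_div_atTop_nhds_zero_nat (2*M)).comp (tendsto_add_atTop_nat 1)
      exact h0.congr (fun k => by rw [Function.comp_apply, Nat.cast_add, Nat.cast_one])
    have hsq : Tendsto (fun k : ℕ => Real.sqrt (2*M/((k:ℝ)+1))) atTop (𝓝 0) := by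
      have h2 := (Real.continuous_sqrt.tendsto 0).comp h1
      simpa [Function.comp_def] using h2
    rw [tendsto_iff_norm_sub_tendsto_zero]
    simp only [sub_zero]
    refine squeeze_zero (fun k => norm_nonneg _) (fun k => ?_) hsq
    calc ‖(m k).1 - (m k).2‖ = Real.sqrt (‖(m k).1 - (m k).2‖^2) :=
          (Real.sqrt_sq (norm_nonneg _)).symm
    _ ≤ Real.sqrt (2*M/((k:ℝ)+1)) := Real.sqrt_le_sqrt (hdnorm k)
  -- extract convergent subsequences
  obtain ⟨qbar, hqbar, σ₁, hσ₁, hconv1⟩ :=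
    ((isCompact_closedBall p r).inter_left hc₁).tendsto_subseq (fun k => (hmS k).1)
  obtain ⟨qbar2, hqbar2, σ₂, hσ₂, hconv2⟩ :=
    ((isCompact_closedBall p r).inter_left hc₂).tendsto_subseq
      (x := fun j => (m (σ₁ j)).2) (fun j => (hmS (σ₁ j)).2)
  set σ : ℕ → ℕ := σ₁ ∘ σ₂ with hσdef
  have hσmono : StrictMono σ := hσ₁.comp hσ₂
  have hconv1' : Tendsto (fun j => (m (σ j)).1) atTop (𝓝 qbar) :=
    (hconv1.comp hσ₂.tendsto_atTop).congr (fun j => rfl)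
  have hconv2' : Tendsto (fun j => (m (σ j)).2) atTop (𝓝 qbar2) := hconv2.congr (fun j => rfl)
  have hqeq : qbar2 = qbar := by
    have h1 : Tendsto (fun j => (m (σ j)).1 - (m (σ j)).2) atTop (𝓝 0) :=
      hdlim.comp hσmono.tendsto_atTop
    have h2 : Tendsto (fun j => (m (σ j)).1 - (m (σ j)).2) atTop (𝓝 (qbar - qbar2)) :=
      hconv1'.sub hconv2'
    have h3 : qbar - qbar2 = 0 := tendsto_nhds_unique h2 h1
    exact (sub_eq_zero.mp h3).symm
  -- the limit point is close to p
  have hqΩ₁ : qbar ∈ Ω₁ := hqbar.1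
  have hqΩ₂ : qbar ∈ Ω₂ := by rw [← hqeq]; exact hqbar2.1
  have hqr : ‖qbar - p‖ ≤ r := by
    have := hqbar.2; rwa [Metric.mem_closedBall, dist_eq_norm] at this
  have hgcont : Continuous (fun z : X × Y₁ × Y₂ =>
      C/2 * i3 (z-p) (z-p) - i3 ξ (z-p)) := by
    apply Continuous.sub
    · exact continuous_const.mul (continuous_i3'.comp
        ((continuous_id.sub continuous_const).prodMk (continuous_id.sub continuous_const)))
    · exact (continuous_i3 ξ).comp (continuous_id.sub continuous_const)
  have hgk : ∀ j, C/2 * i3 ((m (σ j)).1-p) ((m (σ j)).1-p) - i3 ξ ((m (σ j)).1-p) ≤ 0 := by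
    intro j
    have h0 := hφ0 (σ j)
    rw [hφdef] at h0
    simp only at h0
    have hQd0 : 0 ≤ i3 ((m (σ j)).1 - (m (σ j)).2) ((m (σ j)).1 - (m (σ j)).2) :=
      i3_self_nonneg _
    have hk1 : (0:ℝ) ≤ ((σ j : ℝ)+1)/2 := by positivity
    nlinarith [mul_nonneg hk1 hQd0]
  have hglim : C/2 * i3 (qbar-p) (qbar-p) - i3 ξ (qbar-p) ≤ 0 :=
    le_of_tendsto ((hgcont.tendsto qbar).comp hconv1') (Eventually.of_forall hgk)
  have hqi : i3 ξ (qbar-p) ≤ ε/8 * ‖qbar-p‖ := by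
    apply hineq
    exact ⟨by rw [Metric.mem_ball, dist_eq_norm]; exact lt_of_le_of_lt hqr hrδ, hqΩ₁, hqΩ₂⟩
  have hqnear : ‖qbar - p‖ ≤ ε/(4*C) := by
    have h2 : C/2 * ‖qbar-p‖^2 ≤ ε/8 * ‖qbar-p‖ := by
      have := mul_le_mul_of_nonneg_left (norm_sq_le_i3_self (qbar-p))
        (div_nonneg hC0.le (by norm_num : (0:ℝ) ≤ 2))
      linarith
    rcases eq_or_lt_of_le (norm_nonneg (qbar-p)) with hx | hx
    · rw [← hx]; positivity
    · have h7 : C/2 * ‖qbar-p‖ ≤ ε/8 := by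
        apply le_of_mul_le_mul_right _ hx
        calc C/2 * ‖qbar-p‖ * ‖qbar-p‖ = C/2 * ‖qbar-p‖^2 := by ring
        _ ≤ ε/8 * ‖qbar-p‖ := h2
        _ = ε/8 * ‖qbar-p‖ := rfl
      rw [le_div_iff₀ (by linarith : (0:ℝ) < 4*C)]
      nlinarith [h7, hx]
  have ht'0 : (0:ℝ) < ε/(2*C) := by positivity
  have ht'r : ε/(2*C) ≤ r/4 := by
    rw [div_le_div_iff₀ (by linarith : (0:ℝ) < 2*C) (by norm_num)]
    have hrC : r * (2*C) = 2*r + 4*ε := by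
      rw [hCdef]
      have h9 : 2*ε/r * r = 2*ε := div_mul_cancel₀ _ hr0.ne'
      nlinarith [h9]
    nlinarith
  have hβ' : ε/(4*C) ≤ ε/(2*C) := by
    apply div_le_div_of_nonneg_left hε.le (by positivity)
    linarith
  obtain ⟨N₁, hN₁⟩ := Metric.tendsto_atTop.mp hconv1' (ε/(2*C)) ht'0
  obtain ⟨N₂, hN₂⟩ := Metric.tendsto_atTop.mp hconv2' (ε/(2*C)) ht'0
  set j : ℕ := max N₁ N₂ with hjdef
  set k : ℕ := σ j with hkdef
  set a : X × Y₁ × Y₂ := (m k).1 with hadef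
  set b : X × Y₁ × Y₂ := (m k).2 with hbdef
  set K : ℝ := (k:ℝ)+1 with hKdef
  have hK1 : (1:ℝ) ≤ K := by rw [hKdef]; have : (0:ℝ) ≤ (k:ℝ) := Nat.cast_nonneg _; linarith
  have hKC0 : (0:ℝ) < K + C := by linarith
  have haq : ‖a - qbar‖ < ε/(2*C) := by
    rw [← dist_eq_norm]; exact hN₁ j (le_max_left _ _)
  have hbq : ‖b - qbar‖ < ε/(2*C) := by
    have := hN₂ j (le_max_right _ _)
    rw [← dist_eq_norm, ← hqeq]; exact this
  have hmab : m k = (a, b) := by rw [hadef, hbdef]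
  have haS : a ∈ Ω₁ ∩ Metric.closedBall p r := by rw [hadef]; exact (hmS k).1
  have hbS : b ∈ Ω₂ ∩ Metric.closedBall p r := by rw [hbdef]; exact (hmS k).2
  have haΩ : a ∈ Ω₁ := haS.1
  have hbΩ : b ∈ Ω₂ := hbS.1
  have hmin' : IsMinOn (φ k) S (a, b) := by rw [← hmab]; exact hmin k
  clear_value K a b k j
  have hap : ‖a - p‖ ≤ ε/(2*C) + ε/(4*C) := by
    calc ‖a - p‖ = ‖(a - qbar) + (qbar - p)‖ := by rw [sub_add_sub_cancel]
    _ ≤ ‖a - qbar‖ + ‖qbar - p‖ := norm_add_le _ _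
    _ ≤ ε/(2*C) + ε/(4*C) := add_le_add haq.le hqnear
  have hbp : ‖b - p‖ ≤ ε/(2*C) + ε/(4*C) := by
    calc ‖b - p‖ = ‖(b - qbar) + (qbar - p)‖ := by rw [sub_add_sub_cancel]
    _ ≤ ‖b - qbar‖ + ‖qbar - p‖ := norm_add_le _ _
    _ ≤ ε/(2*C) + ε/(4*C) := add_le_add hbq.le hqnear
  have hCbound : ε/(2*C) + ε/(4*C) ≤ 3*ε/4 := by
    have h1 : ε/(2*C) ≤ ε/2 := by
      apply div_le_div_of_nonneg_left hε.le (by norm_num); linarith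
    have h2 : ε/(4*C) ≤ ε/4 := by
      apply div_le_div_of_nonneg_left hε.le (by norm_num); linarith
    linarith
  have hapr : ‖a - p‖ < r := by
    have : ε/(4*C) ≤ r/8 := hβ
    calc ‖a - p‖ ≤ ε/(2*C) + ε/(4*C) := hap
    _ ≤ r/4 + r/8 := add_le_add ht'r hβ
    _ < r := by linarith
  have hbpr : ‖b - p‖ < r := by
    calc ‖b - p‖ ≤ ε/(2*C) + ε/(4*C) := hbp
    _ ≤ r/4 + r/8 := add_le_add ht'r hβ
    _ < r := by linarith
  -- the first-order conditions
  refine ⟨a, b, ξ - K•(a-b) - C•(a-p), K•(a-b), ?_, ?_, ?_, ?_, ?_⟩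
  · calc ‖a - p‖ ≤ ε/(2*C) + ε/(4*C) := hap
    _ ≤ 3*ε/4 := hCbound
    _ ≤ ε := by linarith
  · calc ‖b - p‖ ≤ ε/(2*C) + ε/(4*C) := hbp
    _ ≤ 3*ε/4 := hCbound
    _ ≤ ε := by linarith
  · refine ⟨haΩ, fun ε'' hε'' => ?_⟩
    set ρ : ℝ := min (r - ‖a-p‖) (2*ε''/(3*(K+C))) with hρdef
    have hρ0 : 0 < ρ := lt_min (by linarith) (by positivity)
    have hballmem : Metric.ball a ρ ∈ 𝓝[Ω₁] a :=
      nhdsWithin_le_nhds (Metric.ball_mem_nhds _ hρ0)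
    filter_upwards [hballmem, self_mem_nhdsWithin] with q hqball hqΩ
    have hqdist : ‖q - a‖ < ρ := by rw [← dist_eq_norm]; exact Metric.mem_ball.mp hqball
    have hqcb : q ∈ Metric.closedBall p r := by
      rw [Metric.mem_closedBall, dist_eq_norm]
      calc ‖q - p‖ = ‖(q - a) + (a - p)‖ := by rw [sub_add_sub_cancel]
      _ ≤ ‖q - a‖ + ‖a - p‖ := norm_add_le _ _
      _ ≤ ρ + ‖a - p‖ := by linarith
      _ ≤ (r - ‖a-p‖) + ‖a - p‖ := by
          have := min_le_left (r - ‖a-p‖) (2*ε''/(3*(K+C))); linarith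
      _ = r := by ring
    have hqS : ((q, b) : _) ∈ S := ⟨⟨hqΩ, hqcb⟩, hbS⟩
    have hle := isMinOn_iff.mp hmin' (q, b) hqS
    rw [hφdef] at hle
    simp only at hle
    rw [← hKdef] at hle
    have key := min_algebra ξ p a b q K C (by linarith)
    have h1 : i3 (q-a) (q-a) ≤ 3 * ‖q-a‖^2 := i3_self_le _
    have h2 : ‖q-a‖ ≤ 2*ε''/(3*(K+C)) := le_trans hqdist.le (min_le_right _ _)
    have h3 : (K+C)/2 * i3 (q-a) (q-a) ≤ (3*(K+C))/2 * (‖q-a‖ * ‖q-a‖) := by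
      have := mul_le_mul_of_nonneg_left h1 (le_of_lt (by positivity : (0:ℝ) < (K+C)/2))
      nlinarith [this]
    have h4 : (3*(K+C))/2 * (‖q-a‖ * ‖q-a‖) ≤ (3*(K+C))/2 * ((2*ε''/(3*(K+C))) * ‖q-a‖) := by
      apply mul_le_mul_of_nonneg_left _ (by positivity)
      exact mul_le_mul_of_nonneg_right h2 (norm_nonneg _)
    have h5 : (3*(K+C))/2 * ((2*ε''/(3*(K+C))) * ‖q-a‖) = ε'' * ‖q-a‖ := by
      field_simp; try ring
    linarith
  · refine ⟨hbΩ, fun ε'' hε'' => ?_⟩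
    set ρ : ℝ := min (r - ‖b-p‖) (2*ε''/(3*K)) with hρdef
    have hρ0 : 0 < ρ := lt_min (by linarith) (by positivity)
    have hballmem : Metric.ball b ρ ∈ 𝓝[Ω₂] b :=
      nhdsWithin_le_nhds (Metric.ball_mem_nhds _ hρ0)
    filter_upwards [hballmem, self_mem_nhdsWithin] with q hqball hqΩ
    have hqdist : ‖q - b‖ < ρ := by rw [← dist_eq_norm]; exact Metric.mem_ball.mp hqball
    have hqcb : q ∈ Metric.closedBall p r := by
      rw [Metric.mem_closedBall, dist_eq_norm]
      calc ‖q - p‖ = ‖(q - b) + (b - p)‖ := by rw [sub_add_sub_cancel]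
      _ ≤ ‖q - b‖ + ‖b - p‖ := norm_add_le _ _
      _ ≤ ρ + ‖b - p‖ := by linarith
      _ ≤ (r - ‖b-p‖) + ‖b - p‖ := by
          have := min_le_left (r - ‖b-p‖) (2*ε''/(3*K)); linarith
      _ = r := by ring
    have hqS : ((a, q) : _) ∈ S := ⟨haS, ⟨hqΩ, hqcb⟩⟩
    have hle := isMinOn_iff.mp hmin' (a, q) hqS
    rw [hφdef] at hle
    simp only at hle
    rw [← hKdef] at hle
    have key := min_algebra2 a b q K (by linarith)
    have h1 : i3 (q-b) (q-b) ≤ 3 * ‖q-b‖^2 := i3_self_le _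
    have h2 : ‖q-b‖ ≤ 2*ε''/(3*K) := le_trans hqdist.le (min_le_right _ _)
    have hK0 : (0:ℝ) < K := by linarith
    have h3 : K/2 * i3 (q-b) (q-b) ≤ (3*K)/2 * (‖q-b‖ * ‖q-b‖) := by
      have := mul_le_mul_of_nonneg_left h1 (le_of_lt (by positivity : (0:ℝ) < K/2))
      nlinarith [this]
    have h4 : (3*K)/2 * (‖q-b‖ * ‖q-b‖) ≤ (3*K)/2 * ((2*ε''/(3*K)) * ‖q-b‖) := by
      apply mul_le_mul_of_nonneg_left _ (by positivity)
      exact mul_le_mul_of_nonneg_right h2 (norm_nonneg _)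
    have h5 : (3*K)/2 * ((2*ε''/(3*K)) * ‖q-b‖) = ε'' * ‖q-b‖ := by
      field_simp; try ring
    linarith
  · have heq : (ξ - K•(a-b) - C•(a-p)) + K•(a-b) - ξ = -(C•(a-p)) := by abel
    rw [heq, norm_neg, norm_smul, Real.norm_eq_abs, abs_of_pos hC0]
    calc C * ‖a - p‖ ≤ C * (ε/(2*C) + ε/(4*C)) :=
          mul_le_mul_of_nonneg_left hap hC0.le
    _ = ε/2 + ε/4 := by
          have hCne : C ≠ 0 := ne_of_gt hC0
          field_simp
    _ ≤ ε := by linarith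


-- Ω sets in the triple product
def Omg1 (S : X → Set Y₁) : Set (X × Y₁ × Y₂) := {q | q.2.1 ∈ S q.1}
def Omg2 (S : X → Set Y₂) : Set (X × Y₁ × Y₂) := {q | q.2.2 ∈ S q.1}

lemma isClosed_Omg1 {S : X → Set Y₁} (h : IsClosed (svGraph S)) :
    IsClosed (Omg1 (Y₂ := Y₂) S) :=
  h.preimage (continuous_fst.prodMk continuous_snd.fst)

lemma isClosed_Omg2 {S : X → Set Y₂} (h : IsClosed (svGraph S)) :
    IsClosed (Omg2 (Y₁ := Y₁) S) :=
  h.preimage (continuous_fst.prodMk continuous_snd.snd)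

/-- Scaling of the Fréchet normal cone. -/
lemma fn2_smul {E F : Type*} [NormedAddCommGroup E] [InnerProductSpace ℝ E]
    [NormedAddCommGroup F] [InnerProductSpace ℝ F]
    {Ω : Set (E × F)} {p ξ : E × F} (h : ξ ∈ frechetNormalCone2 Ω p)
    {c : ℝ} (hc : 0 < c) : c • ξ ∈ frechetNormalCone2 Ω p := by
  refine ⟨h.1, fun ε hε => ?_⟩
  filter_upwards [h.2 (ε/c) (by positivity)] with q hq
  have : (c • ξ).1 = c • ξ.1 := rfl
  rw [this, show (c • ξ).2 = c • ξ.2 from rfl, real_inner_smul_left, real_inner_smul_left]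
  have h2 : c * (⟪ξ.1, q.1 - p.1⟫ + ⟪ξ.2, q.2 - p.2⟫) ≤ c * (ε/c * ‖q - p‖) :=
    mul_le_mul_of_nonneg_left hq hc.le
  have h3 : c * (ε/c * ‖q - p‖) = ε * ‖q - p‖ := by field_simp
  linarith

/-- Bridging into the triple product: a Fréchet normal to the graph of the sum
gives a `fn3`-normal to the intersection `Omg1 ∩ Omg2`. -/
lemma bridgeIn {X Y : Type*} [NormedAddCommGroup X] [InnerProductSpace ℝ X]
    [NormedAddCommGroup Y] [InnerProductSpace ℝ Y]
    {S₁ S₂ : X → Set Y} {x : X} {y₁ y₂ : Y} (h1 : y₁ ∈ S₁ x) (h2 : y₂ ∈ S₂ x)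
    {u : X} {w : Y}
    (h : ((u, w) : X × Y) ∈ frechetNormalCone2 (svGraph (fun x => S₁ x + S₂ x)) (x, y₁ + y₂)) :
    ((u, w, w) : X × Y × Y) ∈ fn3 (Omg1 S₁ ∩ Omg2 S₂) (x, y₁, y₂) := by
  refine ⟨⟨h1, h2⟩, fun ε hε => ?_⟩
  have hg : Continuous (fun q : X × Y × Y => ((q.1, q.2.1 + q.2.2) : X × Y)) :=
    continuous_fst.prodMk (continuous_snd.fst.add continuous_snd.snd)
  have hmaps : Set.MapsTo (fun q : X × Y × Y => ((q.1, q.2.1 + q.2.2) : X × Y))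
      (Omg1 S₁ ∩ Omg2 S₂) (svGraph (fun x => S₁ x + S₂ x)) := by
    intro q hq
    exact Set.add_mem_add hq.1 hq.2
  have htend : Tendsto (fun q : X × Y × Y => ((q.1, q.2.1 + q.2.2) : X × Y))
      (nhdsWithin (x, y₁, y₂) (Omg1 S₁ ∩ Omg2 S₂))
      (nhdsWithin (x, y₁ + y₂) (svGraph (fun x => S₁ x + S₂ x))) :=
    hg.continuousWithinAt.tendsto_nhdsWithin hmaps
  filter_upwards [htend.eventually (h.2 (ε/2) (by positivity)),
    self_mem_nhdsWithin] with q hq hqmem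
  have hcomp1 : (q - (x, y₁, y₂)).1 = q.1 - x := rfl
  have hcomp2 : (q - (x, y₁, y₂)).2.1 = q.2.1 - y₁ := rfl
  have hcomp3 : (q - (x, y₁, y₂)).2.2 = q.2.2 - y₂ := rfl
  have hLHS : i3 ((u, w, w) : X × Y × Y) (q - (x, y₁, y₂))
      = ⟪u, q.1 - x⟫ + ⟪w, (q.2.1 + q.2.2) - (y₁ + y₂)⟫ := by
    rw [i3, hcomp1, hcomp2, hcomp3]
    rw [show (q.2.1 + q.2.2) - (y₁ + y₂) = (q.2.1 - y₁) + (q.2.2 - y₂) from by abel,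
      inner_add_right]
    ring
  have hn1 : ‖q.1 - x‖ ≤ ‖q - (x, y₁, y₂)‖ := by
    rw [← hcomp1]; exact norm_fst_le _
  have hn21 : ‖q.2.1 - y₁‖ ≤ ‖q - (x, y₁, y₂)‖ := by
    rw [← hcomp2]
    exact le_trans (norm_fst_le _) (norm_snd_le _)
  have hn22 : ‖q.2.2 - y₂‖ ≤ ‖q - (x, y₁, y₂)‖ := by
    rw [← hcomp3]
    exact le_trans (norm_snd_le _) (norm_snd_le _)
  have hnorm : ‖((q.1, q.2.1 + q.2.2) : X × Y) - (x, y₁ + y₂)‖ ≤ 2 * ‖q - (x, y₁, y₂)‖ := by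
    rw [Prod.norm_def]
    apply max_le
    · simp only [Prod.fst_sub]
      have h0 : (0:ℝ) ≤ ‖q - (x, y₁, y₂)‖ := norm_nonneg _
      linarith [hn1]
    · simp only [Prod.snd_sub]
      calc ‖(q.2.1 + q.2.2) - (y₁ + y₂)‖ = ‖(q.2.1 - y₁) + (q.2.2 - y₂)‖ := by
            rw [show (q.2.1 + q.2.2) - (y₁ + y₂) = (q.2.1 - y₁) + (q.2.2 - y₂) from by abel]
      _ ≤ ‖q.2.1 - y₁‖ + ‖q.2.2 - y₂‖ := norm_add_le _ _
      _ ≤ 2 * ‖q - (x, y₁, y₂)‖ := by linarith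
  rw [hLHS]
  calc ⟪u, q.1 - x⟫ + ⟪w, (q.2.1 + q.2.2) - (y₁ + y₂)⟫
      ≤ ε/2 * ‖((q.1, q.2.1 + q.2.2) : X × Y) - (x, y₁ + y₂)‖ := hq
  _ ≤ ε/2 * (2 * ‖q - (x, y₁, y₂)‖) :=
      mul_le_mul_of_nonneg_left hnorm (by positivity)
  _ = ε * ‖q - (x, y₁, y₂)‖ := by ring

/-- Bridging out of the triple product, first set. -/
lemma bridgeOut1 {S : X → Set Y₁} {q ξ : X × Y₁ × Y₂}
    (h : ξ ∈ fn3 (Omg1 (Y₂ := Y₂) S) q) :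
    ((ξ.1, ξ.2.1) : X × Y₁) ∈ frechetNormalCone2 (svGraph S) (q.1, q.2.1) ∧ ξ.2.2 = 0 := by
  constructor
  · refine ⟨h.1, fun ε hε => ?_⟩
    have hg : Continuous (fun z : X × Y₁ => ((z.1, z.2, q.2.2) : X × Y₁ × Y₂)) :=
      continuous_fst.prodMk (continuous_snd.prodMk continuous_const)
    have hmaps : Set.MapsTo (fun z : X × Y₁ => ((z.1, z.2, q.2.2) : X × Y₁ × Y₂))
        (svGraph S) (Omg1 (Y₂ := Y₂) S) := fun z hz => hz
    have heq : ((q.1, q.2.1, q.2.2) : X × Y₁ × Y₂) = q := rfl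
    have htend : Tendsto (fun z : X × Y₁ => ((z.1, z.2, q.2.2) : X × Y₁ × Y₂))
        (nhdsWithin (q.1, q.2.1) (svGraph S)) (nhdsWithin q (Omg1 (Y₂ := Y₂) S)) := by
      have := hg.continuousWithinAt.tendsto_nhdsWithin (x := ((q.1, q.2.1) : X × Y₁)) hmaps
      simpa using this
    filter_upwards [htend.eventually (h.2 ε hε)] with z hz
    have hval : i3 ξ (((z.1, z.2, q.2.2) : X × Y₁ × Y₂) - q)
        = ⟪ξ.1, z.1 - q.1⟫ + ⟪ξ.2.1, z.2 - q.2.1⟫ := by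
      rw [i3]
      simp [sub_self]
    have hnrm : ‖((z.1, z.2, q.2.2) : X × Y₁ × Y₂) - q‖ = ‖z - (q.1, q.2.1)‖ := by
      rw [norm_prod3, Prod.norm_def]
      simp [sub_self, norm_nonneg, max_eq_left (norm_nonneg _)]
    rw [hval, hnrm] at hz
    exact hz
  · -- the third component vanishes
    have hkey : ∀ w : Y₂, ⟪ξ.2.2, w⟫ ≤ 0 := by
      intro w
      rcases eq_or_ne w 0 with hw | hw
      · simp [hw]
      have hwpos : 0 < ‖w‖ := norm_pos_iff.mpr hw
      have hstep : ∀ ε > (0:ℝ), ⟪ξ.2.2, w⟫ ≤ ε * ‖w‖ := by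
        intro ε hε
        obtain ⟨δ, hδ, hin⟩ := Metric.mem_nhdsWithin_iff.mp (h.2 ε hε)
        set t : ℝ := δ / (2 * ‖w‖) with htdef
        have ht0 : 0 < t := by positivity
        set z : X × Y₁ × Y₂ := q + (0, 0, t • w) with hzdef
        have hzΩ : z ∈ Omg1 (Y₂ := Y₂) S := by
          have : z.2.1 = q.2.1 := by simp [hzdef]
          have h1' : z.1 = q.1 := by simp [hzdef]
          show z.2.1 ∈ S z.1
          rw [this, h1']
          exact h.1
        have hzq : z - q = ((0, 0, t • w) : X × Y₁ × Y₂) := by rw [hzdef]; abel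
        have hznorm : ‖z - q‖ = t * ‖w‖ := by
          rw [hzq, norm_prod3]
          simp [norm_smul, Real.norm_eq_abs, abs_of_pos ht0,
            max_eq_right (by positivity : (0:ℝ) ≤ t * ‖w‖)]
        have hzball : z ∈ Metric.ball q δ := by
          rw [Metric.mem_ball, dist_eq_norm, hznorm, htdef]
          rw [div_mul_eq_mul_div, div_lt_iff₀ (by positivity)]
          nlinarith
        have := hin ⟨hzball, hzΩ⟩
        simp only [Set.mem_setOf_eq] at this
        rw [hzq] at this
        have hii : i3 ξ ((0, 0, t • w) : X × Y₁ × Y₂) = t * ⟪ξ.2.2, w⟫ := by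
          rw [i3]; simp [real_inner_smul_right]
        rw [hii] at this
        have hzn : ‖z - q‖ = t * ‖w‖ := hznorm
        rw [hzq] at hzn
        rw [hzn] at this
        have := le_of_mul_le_mul_left (by linarith [this] : t * ⟪ξ.2.2, w⟫ ≤ t * (ε * ‖w‖)) ht0
        linarith
      by_contra hpos
      push_neg at hpos
      have := hstep (⟪ξ.2.2, w⟫ / (2 * ‖w‖)) (by positivity)
      rw [div_mul_eq_mul_div, mul_div_assoc] at this
      have hq2 : ‖w‖ / (2 * ‖w‖) = 1/2 := by field_simp
      rw [hq2] at this
      linarith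
    have h1 := hkey ξ.2.2
    have : ‖ξ.2.2‖^2 ≤ 0 := by rw [← real_inner_self_eq_norm_sq]; exact h1
    have : ‖ξ.2.2‖ = 0 := by nlinarith [norm_nonneg ξ.2.2, sq_nonneg ‖ξ.2.2‖]
    exact norm_eq_zero.mp this

/-- Bridging out of the triple product, second set. -/
lemma bridgeOut2 {S : X → Set Y₂} {q ξ : X × Y₁ × Y₂}
    (h : ξ ∈ fn3 (Omg2 (Y₁ := Y₁) S) q) :
    ((ξ.1, ξ.2.2) : X × Y₂) ∈ frechetNormalCone2 (svGraph S) (q.1, q.2.2) ∧ ξ.2.1 = 0 := by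
  constructor
  · refine ⟨h.1, fun ε hε => ?_⟩
    have hg : Continuous (fun z : X × Y₂ => ((z.1, q.2.1, z.2) : X × Y₁ × Y₂)) :=
      continuous_fst.prodMk (continuous_const.prodMk continuous_snd)
    have hmaps : Set.MapsTo (fun z : X × Y₂ => ((z.1, q.2.1, z.2) : X × Y₁ × Y₂))
        (svGraph S) (Omg2 (Y₁ := Y₁) S) := fun z hz => hz
    have htend : Tendsto (fun z : X × Y₂ => ((z.1, q.2.1, z.2) : X × Y₁ × Y₂))
        (nhdsWithin (q.1, q.2.2) (svGraph S)) (nhdsWithin q (Omg2 (Y₁ := Y₁) S)) := by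
      have := hg.continuousWithinAt.tendsto_nhdsWithin (x := ((q.1, q.2.2) : X × Y₂)) hmaps
      simpa using this
    filter_upwards [htend.eventually (h.2 ε hε)] with z hz
    have hval : i3 ξ (((z.1, q.2.1, z.2) : X × Y₁ × Y₂) - q)
        = ⟪ξ.1, z.1 - q.1⟫ + ⟪ξ.2.2, z.2 - q.2.2⟫ := by
      rw [i3]
      simp [sub_self]
    have hnrm : ‖((z.1, q.2.1, z.2) : X × Y₁ × Y₂) - q‖ = ‖z - (q.1, q.2.2)‖ := by
      rw [norm_prod3, Prod.norm_def]
      simp [sub_self, max_eq_right (norm_nonneg _)]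
    rw [hval, hnrm] at hz
    exact hz
  · have hkey : ∀ w : Y₁, ⟪ξ.2.1, w⟫ ≤ 0 := by
      intro w
      rcases eq_or_ne w 0 with hw | hw
      · simp [hw]
      have hwpos : 0 < ‖w‖ := norm_pos_iff.mpr hw
      have hstep : ∀ ε > (0:ℝ), ⟪ξ.2.1, w⟫ ≤ ε * ‖w‖ := by
        intro ε hε
        obtain ⟨δ, hδ, hin⟩ := Metric.mem_nhdsWithin_iff.mp (h.2 ε hε)
        set t : ℝ := δ / (2 * ‖w‖) with htdef
        have ht0 : 0 < t := by positivity
        set z : X × Y₁ × Y₂ := q + (0, t • w, 0) with hzdef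
        have hzΩ : z ∈ Omg2 (Y₁ := Y₁) S := by
          have : z.2.2 = q.2.2 := by simp [hzdef]
          have h1' : z.1 = q.1 := by simp [hzdef]
          show z.2.2 ∈ S z.1
          rw [this, h1']
          exact h.1
        have hzq : z - q = ((0, t • w, 0) : X × Y₁ × Y₂) := by rw [hzdef]; abel
        have hznorm : ‖z - q‖ = t * ‖w‖ := by
          rw [hzq, norm_prod3]
          simp [norm_smul, Real.norm_eq_abs, abs_of_pos ht0,
            max_eq_left (by positivity : (0:ℝ) ≤ t * ‖w‖),
            max_eq_right (by positivity : (0:ℝ) ≤ t * ‖w‖)]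
        have hzball : z ∈ Metric.ball q δ := by
          rw [Metric.mem_ball, dist_eq_norm, hznorm, htdef]
          rw [div_mul_eq_mul_div, div_lt_iff₀ (by positivity)]
          nlinarith
        have := hin ⟨hzball, hzΩ⟩
        simp only [Set.mem_setOf_eq] at this
        rw [hzq] at this
        have hii : i3 ξ ((0, t • w, 0) : X × Y₁ × Y₂) = t * ⟪ξ.2.1, w⟫ := by
          rw [i3]; simp [real_inner_smul_right]
        rw [hii] at this
        have hzn : ‖z - q‖ = t * ‖w‖ := hznorm
        rw [hzq] at hzn
        rw [hzn] at this
        have := le_of_mul_le_mul_left (by linarith [this] : t * ⟪ξ.2.1, w⟫ ≤ t * (ε * ‖w‖)) ht0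
        linarith
      by_contra hpos
      push_neg at hpos
      have := hstep (⟪ξ.2.1, w⟫ / (2 * ‖w‖)) (by positivity)
      rw [div_mul_eq_mul_div, mul_div_assoc] at this
      have hq2 : ‖w‖ / (2 * ‖w‖) = 1/2 := by field_simp
      rw [hq2] at this
      linarith
    have h1 := hkey ξ.2.1
    have : ‖ξ.2.1‖^2 ≤ 0 := by rw [← real_inner_self_eq_norm_sq]; exact h1
    have : ‖ξ.2.1‖ = 0 := by nlinarith [norm_nonneg ξ.2.1, sq_nonneg ‖ξ.2.1‖]
    exact norm_eq_zero.mp this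

end SumRuleAux


/-- Sum rule at infinity for coderivatives. -/
theorem stmt3 {n m : ℕ} (S₁ S₂ : Eucl n → Set (Eucl m))
    (h₁ : IsClosed (svGraph S₁)) (h₂ : IsClosed (svGraph S₂))
    (ybar : Eucl m) (hJ : ybar ∈ jelonek (fun x => S₁ x + S₂ x))
    (hbdd : ∃ R > (0:ℝ), ∃ ρ > (0:ℝ), ∃ V ∈ 𝓝 ybar,
      ∀ (x : Eucl n) (y₁ y₂ : Eucl m), R < ‖x‖ → y₁ ∈ S₁ x → y₂ ∈ S₂ x →
        y₁ + y₂ ∈ V → ‖y₁‖ < ρ ∧ ‖y₂‖ < ρ)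
    (hcq : ∀ q ∈ jplus S₁ S₂ ybar,
      coderivAtInfty S₁ q.1 0 ∩ (-(coderivAtInfty S₂ q.2 0)) = ({0} : Set (Eucl n))) :
    LocallyClosedAtInfty (svGraph (fun x => S₁ x + S₂ x)) ybar ∧
      ∀ v : Eucl m, coderivAtInfty (fun x => S₁ x + S₂ x) ybar v ⊆
        ⋃ q ∈ jplus S₁ S₂ ybar,
          (coderivAtInfty S₁ q.1 v + coderivAtInfty S₂ q.2 v) := by
  constructor
  · -- Part 1: local closedness at infinity
    obtain ⟨R, hR, ρ, hρ, V, hV, hbd⟩ := hbdd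
    obtain ⟨δv, hδv, hsub⟩ := Metric.nhds_basis_closedBall.mem_iff.mp hV
    refine ⟨R+1, by linarith, Metric.closedBall ybar δv,
      Metric.closedBall_mem_nhds _ hδv, Metric.isClosed_closedBall, ?_⟩
    apply IsSeqClosed.isClosed
    intro f pl hf hlim
    choose A hA B hB hAB using fun nn => Set.mem_add.mp (hf nn).1
    have hbnd : ∀ nn, ‖A nn‖ < ρ ∧ ‖B nn‖ < ρ := by
      intro nn
      refine hbd (f nn).1 (A nn) (B nn) ?_ (hA nn) (hB nn) ?_
      · exact lt_of_lt_of_le (by linarith) (hf nn).2.1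
      · rw [hAB nn]; exact hsub (hf nn).2.2
    obtain ⟨w1, _, φ₁, hφ₁, hAc⟩ := (isCompact_closedBall (0 : Eucl m) ρ).tendsto_subseq
      (x := A) (fun nn => mem_closedBall_zero_iff.mpr (hbnd nn).1.le)
    obtain ⟨w2, _, φ₂, hφ₂, hBc⟩ := (isCompact_closedBall (0 : Eucl m) ρ).tendsto_subseq
      (x := fun j => B (φ₁ j)) (fun j => mem_closedBall_zero_iff.mpr (hbnd _).2.le)
    set τ : ℕ → ℕ := φ₁ ∘ φ₂ with hτdef
    have hτt : Tendsto τ atTop atTop := (hφ₁.comp hφ₂).tendsto_atTop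
    have hAc' : Tendsto (fun j => A (τ j)) atTop (𝓝 w1) :=
      (hAc.comp hφ₂.tendsto_atTop).congr fun j => rfl
    have hBc' : Tendsto (fun j => B (τ j)) atTop (𝓝 w2) := hBc.congr fun j => rfl
    have hflim : Tendsto (fun j => f (τ j)) atTop (𝓝 pl) := hlim.comp hτt
    have hxlim : Tendsto (fun j => (f (τ j)).1) atTop (𝓝 pl.1) :=
      (continuous_fst.tendsto pl).comp hflim
    have hylim : Tendsto (fun j => (f (τ j)).2) atTop (𝓝 pl.2) :=
      (continuous_snd.tendsto pl).comp hflim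
    have hmem1 : ((pl.1, w1) : Eucl n × Eucl m) ∈ svGraph S₁ :=
      h₁.mem_of_tendsto (hxlim.prodMk_nhds hAc')
        (Eventually.of_forall fun j => hA (τ j))
    have hmem2 : ((pl.1, w2) : Eucl n × Eucl m) ∈ svGraph S₂ :=
      h₂.mem_of_tendsto (hxlim.prodMk_nhds hBc')
        (Eventually.of_forall fun j => hB (τ j))
    have hsum : w1 + w2 = pl.2 :=
      tendsto_nhds_unique ((hAc'.add hBc').congr (fun j => hAB (τ j))) hylim
    refine ⟨?_, ?_, ?_⟩
    · exact Set.mem_add.mpr ⟨w1, hmem1, w2, hmem2, hsum⟩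
    · exact ge_of_tendsto hxlim.norm (Eventually.of_forall fun j => (hf (τ j)).2.1)
    · exact Metric.isClosed_closedBall.mem_of_tendsto hylim
        (Eventually.of_forall fun j => (hf (τ j)).2.2)
  · -- Part 2: sum rule inclusion
    intro v u hu
    obtain ⟨pk, ξk, hpkmem, hpknorm, hpk2, hξkmem, hξklim⟩ := hu
    choose A hA B hB hAB using fun k => Set.mem_add.mp (hpkmem k)
    obtain ⟨R, hR, ρ, hρ, V, hV, hbd⟩ := hbdd
    have hev1 : ∀ᶠ k in atTop, R < ‖(pk k).1‖ := hpknorm.eventually_gt_atTop R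
    have hev2 : ∀ᶠ k in atTop, (pk k).2 ∈ V := hpk2.eventually_mem hV
    obtain ⟨K₀, hK₀⟩ := eventually_atTop.mp (hev1.and hev2)
    have hbnd : ∀ k : ℕ, ‖A (k+K₀)‖ < ρ ∧ ‖B (k+K₀)‖ < ρ := by
      intro k
      have h0 := hK₀ (k + K₀) (Nat.le_add_left _ _)
      refine hbd (pk (k+K₀)).1 (A (k+K₀)) (B (k+K₀)) h0.1 (hA _) (hB _) ?_
      rw [hAB]; exact h0.2
    obtain ⟨y1b, _, φ₁, hφ₁, hAc⟩ := (isCompact_closedBall (0 : Eucl m) ρ).tendsto_subseq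
      (x := fun k => A (k+K₀)) (fun k => mem_closedBall_zero_iff.mpr (hbnd k).1.le)
    obtain ⟨y2b, _, φ₂, hφ₂, hBc⟩ := (isCompact_closedBall (0 : Eucl m) ρ).tendsto_subseq
      (x := fun j => B (φ₁ j + K₀)) (fun j => mem_closedBall_zero_iff.mpr (hbnd (φ₁ j)).2.le)
    set τ : ℕ → ℕ := fun j => φ₁ (φ₂ j) + K₀ with hτdef
    have hτtend : Tendsto τ atTop atTop :=
      (tendsto_add_atTop_nat K₀).comp (hφ₁.comp hφ₂).tendsto_atTop
    have hAcτ : Tendsto (fun j => A (τ j)) atTop (𝓝 y1b) :=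
      (hAc.comp hφ₂.tendsto_atTop).congr fun j => rfl
    have hBcτ : Tendsto (fun j => B (τ j)) atTop (𝓝 y2b) := hBc.congr fun j => rfl
    have hxnorm : Tendsto (fun j => ‖(pk (τ j)).1‖) atTop atTop := hpknorm.comp hτtend
    have hysum : Tendsto (fun j => (pk (τ j)).2) atTop (𝓝 ybar) := hpk2.comp hτtend
    have hy12 : y1b + y2b = ybar :=
      tendsto_nhds_unique ((hAcτ.add hBcτ).congr (fun j => hAB (τ j))) hysum
    have hjp : ((y1b, y2b) : Eucl m × Eucl m) ∈ jplus S₁ S₂ ybar :=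
      ⟨fun j => (pk (τ j)).1, fun j => A (τ j), fun j => B (τ j), hxnorm,
        fun j => hA (τ j), fun j => hB (τ j), hAcτ, hBcτ, hy12⟩
    set εs : ℕ → ℝ := fun j => (1:ℝ)/((j:ℝ)+1) with hεsdef
    have hεs0 : ∀ j, 0 < εs j := fun j => by positivity
    have hεs1 : ∀ j, εs j ≤ 1 := fun j => by
      rw [hεsdef]
      rw [div_le_one (by positivity)]
      have : (0:ℝ) ≤ (j:ℝ) := Nat.cast_nonneg _
      linarith
    have hεlim : Tendsto εs atTop (𝓝 0) := tendsto_one_div_add_atTop_nhds_zero_nat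
    set Zf : ℕ → (Eucl n) × (Eucl m) × (Eucl m) :=
      fun j => ((ξk (τ j)).1, (ξk (τ j)).2, (ξk (τ j)).2) with hZfdef
    have hfuzzy : ∀ j : ℕ, ∃ p₁ p₂ η₁ η₂ : (Eucl n) × (Eucl m) × (Eucl m),
        ‖p₁ - ((pk (τ j)).1, A (τ j), B (τ j))‖ ≤ εs j ∧
        ‖p₂ - ((pk (τ j)).1, A (τ j), B (τ j))‖ ≤ εs j ∧
        η₁ ∈ SumRuleAux.fn3 (SumRuleAux.Omg1 S₁) p₁ ∧
        η₂ ∈ SumRuleAux.fn3 (SumRuleAux.Omg2 S₂) p₂ ∧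
        ‖η₁ + η₂ - Zf j‖ ≤ εs j := by
      intro j
      have hmem := hξkmem (τ j)
      have hpkeq : pk (τ j) = ((pk (τ j)).1, A (τ j) + B (τ j)) := by rw [hAB]
      have hmem' : (((ξk (τ j)).1, (ξk (τ j)).2) : Eucl n × Eucl m) ∈
          frechetNormalCone2 (svGraph (fun x => S₁ x + S₂ x))
          ((pk (τ j)).1, A (τ j) + B (τ j)) := by
        rw [← hpkeq]; exact hmem
      have h3 := SumRuleAux.bridgeIn (hA (τ j)) (hB (τ j)) hmem'
      exact SumRuleAux.fuzzy (SumRuleAux.isClosed_Omg1 h₁)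
        (SumRuleAux.isClosed_Omg2 h₂) h3 (hεs0 j)
    choose P1 P2 N1 N2 hP1 hP2 hN1 hN2 hNsum using hfuzzy
    have hB1 := fun j => SumRuleAux.bridgeOut1 (hN1 j)
    have hB2 := fun j => SumRuleAux.bridgeOut2 (hN2 j)
    -- limits of the multiplier components
    have hul : Tendsto (fun j => (ξk (τ j)).1) atTop (𝓝 u) :=
      (continuous_fst.tendsto _).comp (hξklim.comp hτtend)
    have hwl : Tendsto (fun j => (ξk (τ j)).2) atTop (𝓝 (-v)) :=
      (continuous_snd.tendsto _).comp (hξklim.comp hτtend)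
    have hE : Tendsto (fun j => N1 j + N2 j - Zf j) atTop (𝓝 0) :=
      squeeze_zero_norm hNsum hεlim
    have hEfst : Tendsto (fun j => (N1 j).1 + (N2 j).1 - (ξk (τ j)).1) atTop (𝓝 0) := by
      have := (continuous_fst.tendsto (0 : (Eucl n) × (Eucl m) × (Eucl m))).comp hE
      simpa [Function.comp_def] using this
    have hE21 : Tendsto (fun j => (N1 j).2.1 - (ξk (τ j)).2) atTop (𝓝 0) := by
      have h0 := ((continuous_fst.tendsto ((0 : (Eucl m) × (Eucl m)))).comp
        ((continuous_snd.tendsto (0 : (Eucl n) × (Eucl m) × (Eucl m))).comp hE))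
      have heq : ∀ j, (N1 j + N2 j - Zf j).2.1 = (N1 j).2.1 - (ξk (τ j)).2 := by
        intro j
        show (N1 j).2.1 + (N2 j).2.1 - (ξk (τ j)).2 = _
        rw [(hB2 j).2]; abel
      simpa using h0.congr heq
    have hE22 : Tendsto (fun j => (N2 j).2.2 - (ξk (τ j)).2) atTop (𝓝 0) := by
      have h0 := ((continuous_snd.tendsto ((0 : (Eucl m) × (Eucl m)))).comp
        ((continuous_snd.tendsto (0 : (Eucl n) × (Eucl m) × (Eucl m))).comp hE))
      have heq : ∀ j, (N1 j + N2 j - Zf j).2.2 = (N2 j).2.2 - (ξk (τ j)).2 := by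
        intro j
        show (N1 j).2.2 + (N2 j).2.2 - (ξk (τ j)).2 = _
        rw [(hB1 j).2]; abel
      simpa using h0.congr heq
    have hv1 : Tendsto (fun j => (N1 j).2.1) atTop (𝓝 (-v)) := by
      have := hE21.add hwl
      simpa using this
    have hv2 : Tendsto (fun j => (N2 j).2.2) atTop (𝓝 (-v)) := by
      have := hE22.add hwl
      simpa using this
    -- limits of the base points
    have hP1fst : ∀ j, ‖(P1 j).1 - (pk (τ j)).1‖ ≤ εs j := by
      intro j
      exact le_trans (norm_fst_le (P1 j - ((pk (τ j)).1, A (τ j), B (τ j)))) (hP1 j)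
    have hP2fst : ∀ j, ‖(P2 j).1 - (pk (τ j)).1‖ ≤ εs j := by
      intro j
      exact le_trans (norm_fst_le (P2 j - ((pk (τ j)).1, A (τ j), B (τ j)))) (hP2 j)
    have hp1x : Tendsto (fun j => ‖(P1 j).1‖) atTop atTop := by
      apply tendsto_atTop_mono' atTop
        (Eventually.of_forall (fun j => ?_))
        (tendsto_atTop_add_const_right atTop (-1) hxnorm)
      have h5 : ‖(pk (τ j)).1‖ - ‖(P1 j).1‖ ≤ 1 := by
        calc ‖(pk (τ j)).1‖ - ‖(P1 j).1‖ ≤ ‖(pk (τ j)).1 - (P1 j).1‖ := norm_sub_norm_le _ _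
        _ = ‖(P1 j).1 - (pk (τ j)).1‖ := norm_sub_rev _ _
        _ ≤ εs j := hP1fst j
        _ ≤ 1 := hεs1 j
      linarith
    have hp2x : Tendsto (fun j => ‖(P2 j).1‖) atTop atTop := by
      apply tendsto_atTop_mono' atTop
        (Eventually.of_forall (fun j => ?_))
        (tendsto_atTop_add_const_right atTop (-1) hxnorm)
      have h5 : ‖(pk (τ j)).1‖ - ‖(P2 j).1‖ ≤ 1 := by
        calc ‖(pk (τ j)).1‖ - ‖(P2 j).1‖ ≤ ‖(pk (τ j)).1 - (P2 j).1‖ := norm_sub_norm_le _ _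
        _ = ‖(P2 j).1 - (pk (τ j)).1‖ := norm_sub_rev _ _
        _ ≤ εs j := hP2fst j
        _ ≤ 1 := hεs1 j
      linarith
    have hp1y : Tendsto (fun j => (P1 j).2.1) atTop (𝓝 y1b) := by
      have hz : Tendsto (fun j => (P1 j).2.1 - A (τ j)) atTop (𝓝 0) := by
        apply squeeze_zero_norm (fun j => ?_) hεlim
        calc ‖(P1 j).2.1 - A (τ j)‖
            = ‖(P1 j - ((pk (τ j)).1, A (τ j), B (τ j))).2.1‖ := rfl
        _ ≤ ‖(P1 j - ((pk (τ j)).1, A (τ j), B (τ j))).2‖ := norm_fst_le _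
        _ ≤ ‖P1 j - ((pk (τ j)).1, A (τ j), B (τ j))‖ := norm_snd_le _
        _ ≤ εs j := hP1 j
      have := hz.add hAcτ
      simpa using this
    have hp2y : Tendsto (fun j => (P2 j).2.2) atTop (𝓝 y2b) := by
      have hz : Tendsto (fun j => (P2 j).2.2 - B (τ j)) atTop (𝓝 0) := by
        apply squeeze_zero_norm (fun j => ?_) hεlim
        calc ‖(P2 j).2.2 - B (τ j)‖
            = ‖(P2 j - ((pk (τ j)).1, A (τ j), B (τ j))).2.2‖ := rfl
        _ ≤ ‖(P2 j - ((pk (τ j)).1, A (τ j), B (τ j))).2‖ := norm_snd_le _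
        _ ≤ ‖P2 j - ((pk (τ j)).1, A (τ j), B (τ j))‖ := norm_snd_le _
        _ ≤ εs j := hP2 j
      have := hz.add hBcτ
      simpa using this
    -- normalization and subsequence extraction for the multipliers
    set s : ℕ → ℝ := fun j => 1 + ‖(N1 j).1‖ with hsdef
    have hs1 : ∀ j, (1:ℝ) ≤ s j := fun j => by
      rw [hsdef]; have := norm_nonneg (N1 j).1; simp only; linarith
    have hs0 : ∀ j, (0:ℝ) < s j := fun j => lt_of_lt_of_le one_pos (hs1 j)
    set ζ1 : ℕ → Eucl n := fun j => (s j)⁻¹ • (N1 j).1 with hζ1def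
    have hζ1norm : ∀ j, ‖ζ1 j‖ = 1 - (s j)⁻¹ := by
      intro j
      rw [hζ1def]
      simp only [norm_smul, Real.norm_eq_abs, abs_of_pos (inv_pos.mpr (hs0 j))]
      have hval : ‖(N1 j).1‖ = s j - 1 := by rw [hsdef]; simp only; ring
      rw [hval]
      rw [mul_sub, inv_mul_cancel₀ (hs0 j).ne', mul_one]
    have hζ1mem : ∀ j, ζ1 j ∈ Metric.closedBall (0 : Eucl n) 1 := by
      intro j
      rw [mem_closedBall_zero_iff, hζ1norm j]
      have := inv_pos.mpr (hs0 j)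
      linarith
    obtain ⟨η, _, ψ₁, hψ₁, hζconv⟩ :=
      (isCompact_closedBall (0 : Eucl n) 1).tendsto_subseq hζ1mem
    have hsinvmem : ∀ j, (s (ψ₁ j))⁻¹ ∈ Set.Icc (0:ℝ) 1 := by
      intro j
      constructor
      · exact (inv_pos.mpr (hs0 _)).le
      · rw [inv_le_one_iff₀]; right; exact hs1 _
    obtain ⟨c, hcmem, ψ₂, hψ₂, hcconv⟩ :=
      (isCompact_Icc (a := (0:ℝ)) (b := 1)).tendsto_subseq hsinvmem
    set θ : ℕ → ℕ := ψ₁ ∘ ψ₂ with hθdef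
    have hθtend : Tendsto θ atTop atTop := (hψ₁.comp hψ₂).tendsto_atTop
    have hζθ : Tendsto (fun i => ζ1 (θ i)) atTop (𝓝 η) :=
      (hζconv.comp hψ₂.tendsto_atTop).congr fun i => rfl
    have hcθ : Tendsto (fun i => (s (θ i))⁻¹) atTop (𝓝 c) := hcconv.congr fun i => rfl
    rcases eq_or_lt_of_le hcmem.1 with hc0 | hcpos
    · -- degenerate case: contradiction with the CQ
      exfalso
      have hηnorm : ‖η‖ = 1 := by
        have hn : Tendsto (fun i => ‖ζ1 (θ i)‖) atTop (𝓝 ‖η‖) := hζθ.norm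
        have hn2 : Tendsto (fun i => ‖ζ1 (θ i)‖) atTop (𝓝 (1 - c)) := by
          have := (tendsto_const_nhds (x := (1:ℝ))).sub hcθ
          exact this.congr (fun i => (hζ1norm (θ i)).symm)
        have := tendsto_nhds_unique hn hn2
        rw [this, ← hc0]; ring
      have hη1 : η ∈ coderivAtInfty S₁ y1b 0 := by
        show ((η, -(0:Eucl m)) : Eucl n × Eucl m) ∈ normalConeAtInfty (svGraph S₁) y1b
        rw [neg_zero]
        refine ⟨fun i => ((P1 (θ i)).1, (P1 (θ i)).2.1),
          fun i => (s (θ i))⁻¹ • (((N1 (θ i)).1, (N1 (θ i)).2.1) : Eucl n × Eucl m),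
          fun i => (hB1 (θ i)).1.1, hp1x.comp hθtend, hp1y.comp hθtend,
          fun i => SumRuleAux.fn2_smul (hB1 (θ i)).1 (inv_pos.mpr (hs0 _)), ?_⟩
        have h1 : Tendsto (fun i => (s (θ i))⁻¹ • (N1 (θ i)).2.1) atTop (𝓝 (0 : Eucl m)) := by
          have := hcθ.smul (hv1.comp hθtend)
          rw [← hc0] at this
          simpa using this
        exact hζθ.prodMk_nhds h1
      have hη2 : -η ∈ coderivAtInfty S₂ y2b 0 := by
        show ((-η, -(0:Eucl m)) : Eucl n × Eucl m) ∈ normalConeAtInfty (svGraph S₂) y2b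
        rw [neg_zero]
        refine ⟨fun i => ((P2 (θ i)).1, (P2 (θ i)).2.2),
          fun i => (s (θ i))⁻¹ • (((N2 (θ i)).1, (N2 (θ i)).2.2) : Eucl n × Eucl m),
          fun i => (hB2 (θ i)).1.1, hp2x.comp hθtend, hp2y.comp hθtend,
          fun i => SumRuleAux.fn2_smul (hB2 (θ i)).1 (inv_pos.mpr (hs0 _)), ?_⟩
        have h1 : Tendsto (fun i => (s (θ i))⁻¹ • (N2 (θ i)).1) atTop (𝓝 (-η)) := by
          have ha : Tendsto (fun i => (s (θ i))⁻¹ •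
              ((N1 (θ i)).1 + (N2 (θ i)).1 - (ξk (τ (θ i))).1)) atTop (𝓝 (0 : Eucl n)) := by
            have := hcθ.smul (hEfst.comp hθtend)
            simpa using this
          have hb : Tendsto (fun i => (s (θ i))⁻¹ • (ξk (τ (θ i))).1) atTop (𝓝 (0 : Eucl n)) := by
            have := hcθ.smul (hul.comp hθtend)
            rw [← hc0] at this
            simpa using this
          have hcomb := (ha.sub hζθ).add hb
          have heq : ∀ i, ((s (θ i))⁻¹ •
              ((N1 (θ i)).1 + (N2 (θ i)).1 - (ξk (τ (θ i))).1) - ζ1 (θ i))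
              + (s (θ i))⁻¹ • (ξk (τ (θ i))).1 = (s (θ i))⁻¹ • (N2 (θ i)).1 := by
            intro i
            rw [hζ1def]
            simp only [smul_sub, smul_add]
            abel
          have := hcomb.congr heq
          simpa using this
        have h2 : Tendsto (fun i => (s (θ i))⁻¹ • (N2 (θ i)).2.2) atTop (𝓝 (0 : Eucl m)) := by
          have := hcθ.smul (hv2.comp hθtend)
          rw [← hc0] at this
          simpa using this
        exact h1.prodMk_nhds h2
      have hmem : η ∈ coderivAtInfty S₁ (y1b, y2b).1 0 ∩ (-(coderivAtInfty S₂ (y1b, y2b).2 0)) :=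
        ⟨hη1, Set.mem_neg.mpr (by simpa using hη2)⟩
      rw [hcq (y1b, y2b) hjp] at hmem
      rw [Set.mem_singleton_iff] at hmem
      rw [hmem] at hηnorm
      simp at hηnorm
    · -- nondegenerate case
      have hcne : c ≠ 0 := ne_of_gt hcpos
      have hslim : Tendsto (fun i => s (θ i)) atTop (𝓝 c⁻¹) := by
        have := hcθ.inv₀ hcne
        exact this.congr fun i => inv_inv _
      have hN1lim : Tendsto (fun i => (N1 (θ i)).1) atTop (𝓝 (c⁻¹ • η)) := by
        have := hslim.smul hζθ
        exact this.congr fun i => by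
          rw [hζ1def]; simp only; rw [smul_inv_smul₀ (hs0 (θ i)).ne']
      set u1 : Eucl n := c⁻¹ • η with hu1def
      have hN2lim : Tendsto (fun i => (N2 (θ i)).1) atTop (𝓝 (u - u1)) := by
        have hcomb := (((hEfst.comp hθtend).sub hN1lim).add (hul.comp hθtend))
        have heq : ∀ i, ((N1 (θ i)).1 + (N2 (θ i)).1 - (ξk (τ (θ i))).1 - (N1 (θ i)).1)
            + (ξk (τ (θ i))).1 = (N2 (θ i)).1 := fun i => by abel
        have h9 := hcomb.congr heq
        have h10 : (0 : Eucl n) - u1 + u = u - u1 := by abel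
        rw [h10] at h9
        exact h9
      have hu1mem : u1 ∈ coderivAtInfty S₁ y1b v := by
        show ((u1, -v) : Eucl n × Eucl m) ∈ normalConeAtInfty (svGraph S₁) y1b
        exact ⟨fun i => ((P1 (θ i)).1, (P1 (θ i)).2.1),
          fun i => (((N1 (θ i)).1, (N1 (θ i)).2.1) : Eucl n × Eucl m),
          fun i => (hB1 (θ i)).1.1, hp1x.comp hθtend, hp1y.comp hθtend,
          fun i => (hB1 (θ i)).1, hN1lim.prodMk_nhds (hv1.comp hθtend)⟩
      have hu2mem : u - u1 ∈ coderivAtInfty S₂ y2b v := by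
        show ((u - u1, -v) : Eucl n × Eucl m) ∈ normalConeAtInfty (svGraph S₂) y2b
        exact ⟨fun i => ((P2 (θ i)).1, (P2 (θ i)).2.2),
          fun i => (((N2 (θ i)).1, (N2 (θ i)).2.2) : Eucl n × Eucl m),
          fun i => (hB2 (θ i)).1.1, hp2x.comp hθtend, hp2y.comp hθtend,
          fun i => (hB2 (θ i)).1, hN2lim.prodMk_nhds (hv2.comp hθtend)⟩
      apply Set.mem_iUnion₂.mpr
      exact ⟨(y1b, y2b), hjp, Set.mem_add.mpr ⟨u1, hu1mem, u - u1, hu2mem, by abel⟩⟩
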